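/- Let (H, 𝔉) be a measurable space, let μ and ν be probability measures on H, and let ε, δ ≥ 0 be such that for every measurable set B ⊆ H both μ(B) ≤ e^ε·ν(B) + δ and ν(B) ≤ e^ε·μ(B) + δ hold. Let f : H → ℝ be measurable with 0 ≤ f(h) ≤ M for all h ∈ H, where M > 0. Then |∫ f dμ − ∫ f dν| ≤ M·δ·e^{−ε} + M·(1 − e^{−ε}). -/

import Mathlib

open MeasureTheory Real

lemma stability_privacy_aux
    {H : Type*} [MeasurableSpace H]
    (μ ν : Measure H) [IsProbabilityMeasure μ] [IsProbabilityMeasure ν]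
    (ε δ M : ℝ) (hε : 0 ≤ ε) (hδ : 0 ≤ δ) (hM : 0 < M)
    (hdp : ∀ B : Set H, MeasurableSet B →
      μ B ≤ ENNReal.ofReal (Real.exp ε) * ν B + ENNReal.ofReal δ)
    (f : H → ℝ) (hf : Measurable f)
    (hf0 : ∀ h, 0 ≤ f h) (hfM : ∀ h, f h ≤ M) :
    ∫ h, f h ∂μ - ∫ h, f h ∂ν ≤ M * δ * Real.exp (-ε) + M * (1 - Real.exp (-ε)) := by
  set E := Real.exp (-ε) with hE
  have hEpos : 0 < E := Real.exp_pos _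
  have hE1 : E ≤ 1 := Real.exp_le_one_iff.mpr (by linarith)
  have hmul : Real.exp ε * E = 1 := by rw [hE, ← Real.exp_add]; simp
  set gμ : ℝ → ℝ := fun t => (μ {a | t < f a}).toReal with hgμ
  set gν : ℝ → ℝ := fun t => (ν {a | t < f a}).toReal with hgν
  -- pointwise key inequality
  have hkey : ∀ t : ℝ, gμ t ≤ gν t + (δ * E + (1 - E)) := by
    intro t
    have hB : MeasurableSet {a | t < f a} := measurableSet_lt measurable_const hf
    have h1 := hdp _ hB
    have ha1 : (μ {a | t < f a}).toReal ≤ 1 := by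
      have := prob_le_one (μ := μ) (s := {a | t < f a})
      simpa using ENNReal.toReal_mono ENNReal.one_ne_top this
    have hb0 : 0 ≤ (ν {a | t < f a}).toReal := ENNReal.toReal_nonneg
    have hreal : (μ {a | t < f a}).toReal ≤ Real.exp ε * (ν {a | t < f a}).toReal + δ := by
      have hfin : (ENNReal.ofReal (Real.exp ε) * ν {a | t < f a} + ENNReal.ofReal δ) ≠ ⊤ := by
        apply ENNReal.add_ne_top.mpr
        constructor
        · exact ENNReal.mul_ne_top ENNReal.ofReal_ne_top (measure_ne_top _ _)
        · exact ENNReal.ofReal_ne_top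
      have := ENNReal.toReal_mono hfin h1
      rwa [ENNReal.toReal_add (ENNReal.mul_ne_top ENNReal.ofReal_ne_top (measure_ne_top _ _))
        ENNReal.ofReal_ne_top, ENNReal.toReal_mul, ENNReal.toReal_ofReal (Real.exp_pos _).le,
        ENNReal.toReal_ofReal hδ] at this
    have h2 : E * (μ {a | t < f a}).toReal ≤ E * (Real.exp ε * (ν {a | t < f a}).toReal + δ) :=
      mul_le_mul_of_nonneg_left hreal hEpos.le
    simp only [hgμ, hgν]
    nlinarith [h2, ha1, hb0, hEpos, hE1, hmul]
  -- bounds and vanishing beyond M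
  have hbdμ : ∀ t, |gμ t| ≤ 1 := by
    intro t
    rw [abs_of_nonneg ENNReal.toReal_nonneg]
    have := prob_le_one (μ := μ) (s := {a | t < f a})
    simpa using ENNReal.toReal_mono ENNReal.one_ne_top this
  have hbdν : ∀ t, |gν t| ≤ 1 := by
    intro t
    rw [abs_of_nonneg ENNReal.toReal_nonneg]
    have := prob_le_one (μ := ν) (s := {a | t < f a})
    simpa using ENNReal.toReal_mono ENNReal.one_ne_top this
  have hvanμ : ∀ t : ℝ, M ≤ t → gμ t = 0 := by
    intro t ht
    have hempty : {a | t < f a} = (∅ : Set H) := by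
      ext a; simp only [Set.mem_setOf_eq, Set.mem_empty_iff_false, iff_false, not_lt]
      exact (hfM a).trans ht
    simp [hgμ, hempty]
  have hvanν : ∀ t : ℝ, M ≤ t → gν t = 0 := by
    intro t ht
    have hempty : {a | t < f a} = (∅ : Set H) := by
      ext a; simp only [Set.mem_setOf_eq, Set.mem_empty_iff_false, iff_false, not_lt]
      exact (hfM a).trans ht
    simp [hgν, hempty]
  -- measurability of g's
  have hmono : ∀ (m : Measure H) [IsProbabilityMeasure m],
      Antitone (fun t => (m {a | t < f a}).toReal) := by
    intro m _ s t hst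
    exact ENNReal.toReal_mono (measure_ne_top _ _)
      (measure_mono (fun a ha => lt_of_le_of_lt hst ha))
  have hmeasμ : Measurable gμ := (hmono μ).measurable
  have hmeasν : Measurable gν := (hmono ν).measurable
  -- integrability on Ioc 0 M
  have hintOn : ∀ (g : ℝ → ℝ), Measurable g → (∀ t, |g t| ≤ 1) →
      IntegrableOn g (Set.Ioc 0 M) volume := by
    intro g hg hbd
    apply Integrable.mono' (integrable_const 1) hg.aestronglyMeasurable.restrict
    filter_upwards with t using hbd t
  have hintμ' : IntegrableOn gμ (Set.Ioc 0 M) volume := hintOn gμ hmeasμ hbdμ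
  have hintν' : IntegrableOn gν (Set.Ioc 0 M) volume := hintOn gν hmeasν hbdν
  -- integrability of f
  have hintf : ∀ (m : Measure H) [IsProbabilityMeasure m], Integrable f m := by
    intro m _
    apply Integrable.mono' (integrable_const M) hf.aestronglyMeasurable
    filter_upwards with a
    rw [Real.norm_eq_abs, abs_of_nonneg (hf0 a)]; exact hfM a
  rw [(hintf μ).integral_eq_integral_meas_lt (Filter.Eventually.of_forall hf0),
      (hintf ν).integral_eq_integral_meas_lt (Filter.Eventually.of_forall hf0)]
  -- restrict to Ioc 0 M
  have hsplit : ∀ (g : ℝ → ℝ), Measurable g → (∀ t, |g t| ≤ 1) → (∀ t, M ≤ t → g t = 0) →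
      ∫ t in Set.Ioi 0, g t = ∫ t in Set.Ioc 0 M, g t := by
    intro g hg hbd hvan
    have hunion : Set.Ioi (0:ℝ) = Set.Ioc 0 M ∪ Set.Ioi M := (Set.Ioc_union_Ioi_eq_Ioi hM.le).symm
    have hzero : Integrable g (volume.restrict (Set.Ioi M)) := by
      have hz : (fun t => g t) =ᵐ[volume.restrict (Set.Ioi M)] 0 := by
        filter_upwards [ae_restrict_mem measurableSet_Ioi] with t ht
        exact hvan t (le_of_lt ht)
      exact (integrable_zero _ _ _).congr hz.symm
    rw [hunion, setIntegral_union (Set.Ioc_disjoint_Ioi le_rfl) measurableSet_Ioi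
      (hintOn g hg hbd) hzero]
    have hz0 : ∫ t in Set.Ioi M, g t = 0 := by
      apply setIntegral_eq_zero_of_forall_eq_zero
      intro t ht; exact hvan t (le_of_lt ht)
    rw [hz0, add_zero]
  change (∫ t in Set.Ioi 0, gμ t) - ∫ t in Set.Ioi 0, gν t ≤ _
  rw [hsplit gμ hmeasμ hbdμ hvanμ, hsplit gν hmeasν hbdν hvanν]
  -- now bound the difference on Ioc 0 M
  have hle : ∫ t in Set.Ioc 0 M, gμ t ≤ ∫ t in Set.Ioc 0 M, (gν t + (δ * E + (1 - E))) := by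
    apply integral_mono hintμ' (hintν'.add ((integrableOn_const_iff).mpr (Or.inr (by
      rw [Real.volume_Ioc]; exact ENNReal.ofReal_lt_top))))
    intro t; exact hkey t
  have hconst : ∫ t in Set.Ioc 0 M, (gν t + (δ * E + (1 - E)))
      = (∫ t in Set.Ioc 0 M, gν t) + M * (δ * E + (1 - E)) := by
    rw [integral_add hintν' ((integrableOn_const_iff).mpr (Or.inr (by
      rw [Real.volume_Ioc]; exact ENNReal.ofReal_lt_top)))]
    congr 1
    rw [setIntegral_const, measureReal_def, Real.volume_Ioc, ENNReal.toReal_ofReal (by linarith), smul_eq_mul]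
    ring_nf
  rw [hconst] at hle
  have : M * (δ * E + (1 - E)) = M * δ * E + M * (1 - E) := by ring
  linarith [hle]

/-- Stability–privacy lemma: if two probability measures satisfy a two-sided
(ε,δ)-differential-privacy inequality, then the expectations of any loss bounded
in [0, M] differ by at most M·δ·e^{−ε} + M·(1 − e^{−ε}). -/
theorem stability_privacy
    {H : Type*} [MeasurableSpace H]
    (μ ν : Measure H) [IsProbabilityMeasure μ] [IsProbabilityMeasure ν]
    (ε δ M : ℝ) (hε : 0 ≤ ε) (hδ : 0 ≤ δ) (hM : 0 < M)
    (hdp : ∀ B : Set H, MeasurableSet B →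
      μ B ≤ ENNReal.ofReal (Real.exp ε) * ν B + ENNReal.ofReal δ ∧
      ν B ≤ ENNReal.ofReal (Real.exp ε) * μ B + ENNReal.ofReal δ)
    (f : H → ℝ) (hf : Measurable f)
    (hf0 : ∀ h, 0 ≤ f h) (hfM : ∀ h, f h ≤ M) :
    |∫ h, f h ∂μ - ∫ h, f h ∂ν| ≤ M * δ * Real.exp (-ε) + M * (1 - Real.exp (-ε)) := by
  rw [abs_sub_le_iff]
  constructor
  · exact stability_privacy_aux μ ν ε δ M hε hδ hM (fun B hB => (hdp B hB).1) f hf hf0 hfM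
  · exact stability_privacy_aux ν μ ε δ M hε hδ hM (fun B hB => (hdp B hB).2) f hf hf0 hfM
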